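/- Let 2 ≤ r < s be integers with 2r > s and s even. Then the minimum order n_bb(r,s;4) of a balanced biregular graph of girth 4 with degrees r and s equals 2s. -/

import Mathlib

open SimpleGraph Set

/-- The degree of a vertex, via the natural cardinality of its neighbor set. -/
noncomputable def deg {V : Type*} (G : SimpleGraph V) (v : V) : ℕ :=
  (G.neighborSet v).ncard

/-- Number of edges both of whose endpoints have degree `d`. -/
noncomputable def edgeCountDeg {V : Type*} (G : SimpleGraph V) (d : ℕ) : ℕ :=
  {e ∈ G.edgeSet | ∀ v ∈ e, deg G v = d}.ncard

/-- An `(r,s;g)`-balanced biregular graph: girth `g`, degree set exactly `{r, s}`,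
and equally many vertices of degree `r` as of degree `s`. -/
def IsBabi {V : Type*} (r s g : ℕ) (G : SimpleGraph V) : Prop :=
  G.girth = g ∧ (∀ v, deg G v = r ∨ deg G v = s) ∧
  (∃ v, deg G v = r) ∧ (∃ v, deg G v = s) ∧
  {v | deg G v = r}.ncard = {v | deg G v = s}.ncard

/-! ### Auxiliary lemmas -/

lemma deg_filter {V : Type*} [Fintype V] (G : SimpleGraph V) [DecidableRel G.Adj] (v : V) :
    deg G v = (Finset.univ.filter (fun w => G.Adj v w)).card := by
  classical
  rw [deg, Set.ncard_eq_toFinset_card']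
  congr 1
  ext w
  rw [Set.mem_toFinset]
  simp [neighborSet]

lemma card_filter_fin (n : ℕ) (P : ℕ → Prop) [DecidablePred P] :
    (Finset.univ.filter (fun v : Fin n => P v.val)).card = ((Finset.range n).filter P).card := by
  apply Finset.card_bij (fun v _ => v.val)
  · intro a ha; simp at ha ⊢; exact ha
  · intro a _ b _ h; exact Fin.val_injective h
  · intro b hb; simp at hb; exact ⟨⟨b, hb.1⟩, by simp [hb.2]⟩

lemma egirth_le_of_cycle {α : Type*} {G : SimpleGraph α} {a : α} (w : G.Walk a a)
    (h : w.IsCycle) : G.egirth ≤ w.length := by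
  simp [egirth]
  exact iInf₂_le_of_le a w (iInf_le _ h)

lemma triangle_free_of_girth_four {α : Type*} {G : SimpleGraph α} (hg : G.girth = 4) :
    ∀ a b c : α, G.Adj a b → G.Adj a c → G.Adj b c → False := by
  intro a b c hab hac hbc
  have hcl : ∃ S : Finset α, G.IsNClique 3 S := by
    classical
    exact ⟨{a, b, c}, is3Clique_triple_iff.mpr ⟨hab, hac, hbc⟩⟩
  obtain ⟨u, w, hw, hl⟩ := is3Clique_iff_exists_cycle_length_three.mp hcl
  have h3 : G.egirth ≤ 3 := by
    have := egirth_le_of_cycle w hw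
    rw [hl] at this
    exact_mod_cast this
  have : G.girth ≤ 3 := by
    have := ENat.toNat_le_toNat h3 (by simp)
    simpa [girth] using this
  omega

lemma two_ico_card (a b c d : ℕ) (hbc : b ≤ c) :
    (Finset.Ico a b ∪ Finset.Ico c d).card = (b - a) + (d - c) := by
  rw [Finset.card_union_of_disjoint, Nat.card_Ico, Nat.card_Ico]
  exact Finset.disjoint_left.mpr fun x hx hy => by
    simp [Finset.mem_Ico] at hx hy; omega

/-! ### The construction -/

def lrel (t k i j : ℕ) : Prop := (i ≤ j ∧ j < i + k) ∨ j + t < i + k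

def cross (s t k p q : ℕ) : Prop :=
  p < s ∧ s ≤ q ∧ (p < t ∨ q < s + t ∨ lrel t k (p - t) (q - (s + t)))

instance (t k i j : ℕ) : Decidable (lrel t k i j) := by unfold lrel; infer_instance
instance (s t k p q : ℕ) : Decidable (cross s t k p q) := by unfold cross; infer_instance

def myG (s t k : ℕ) : SimpleGraph (Fin (2 * s)) where
  Adj v w := cross s t k v.val w.val ∨ cross s t k w.val v.val
  symm := ⟨fun v w h => h.symm⟩
  loopless := ⟨fun v h => by
    rcases h with h | h <;> · obtain ⟨h1, h2, -⟩ := h; omega⟩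

instance (s t k : ℕ) : DecidableRel (myG s t k).Adj := fun v w => by
  show Decidable (cross s t k v.val w.val ∨ cross s t k w.val v.val); exact instDecidableOr

lemma myG_deg (s t k : ℕ) (ht : 2 ≤ t) (hs : s = 2 * t) (hk1 : 1 ≤ k) (hkt : k < t)
    (v : Fin (2 * s)) :
    deg (myG s t k) v = if v.val < t ∨ (s ≤ v.val ∧ v.val < s + t) then s else t + k := by
  have hv := v.isLt
  rw [deg_filter]
  have e0 : (Finset.univ.filter (fun w => (myG s t k).Adj v w))
      = (Finset.univ.filter (fun w : Fin (2*s) => cross s t k v.val w.val ∨ cross s t k w.val v.val)) := by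
    ext w
    simp only [Finset.mem_filter]
    exact and_congr_right fun _ => Iff.rfl
  rw [e0, card_filter_fin (2*s) (fun m => cross s t k v.val m ∨ cross s t k m v.val)]
  rcases lt_or_ge v.val t with h1 | h1
  · rw [if_pos (Or.inl h1)]
    have e : ((Finset.range (2*s)).filter (fun m => cross s t k v.val m ∨ cross s t k m v.val))
        = Finset.Ico s (2*s) := by
      ext m; rw [Finset.mem_filter]; simp only [Finset.mem_filter, Finset.mem_range, Finset.mem_Ico, cross, lrel]; omega
    rw [e, Nat.card_Ico]; omega
  rcases lt_or_ge v.val s with h2 | h2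
  · rw [if_neg (by omega)]
    by_cases hc : (v.val - t) + k ≤ t
    · have e : ((Finset.range (2*s)).filter (fun m => cross s t k v.val m ∨ cross s t k m v.val))
          = Finset.Ico s (s+t) ∪ Finset.Ico (s+t+(v.val-t)) (s+t+(v.val-t)+k) := by
        ext m
        rw [Finset.mem_filter]
        simp only [Finset.mem_filter, Finset.mem_range, Finset.mem_union, Finset.mem_Ico,
          cross, lrel]
        omega
      rw [e, two_ico_card _ _ _ _ (by omega)]; omega
    · have e : ((Finset.range (2*s)).filter (fun m => cross s t k v.val m ∨ cross s t k m v.val))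
          = Finset.Ico s (s+(v.val-t)+k) ∪ Finset.Ico (s+t+(v.val-t)) (2*s) := by
        ext m
        rw [Finset.mem_filter]
        simp only [Finset.mem_filter, Finset.mem_range, Finset.mem_union, Finset.mem_Ico,
          cross, lrel]
        omega
      rw [e, two_ico_card _ _ _ _ (by omega)]; omega
  rcases lt_or_ge v.val (s+t) with h3 | h3
  · rw [if_pos (Or.inr ⟨h2, h3⟩)]
    have e : ((Finset.range (2*s)).filter (fun m => cross s t k v.val m ∨ cross s t k m v.val))
        = Finset.Ico 0 s := by
      ext m; rw [Finset.mem_filter]; simp only [Finset.mem_filter, Finset.mem_range, Finset.mem_Ico, cross, lrel]; omega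
    rw [e, Nat.card_Ico]; omega
  · rw [if_neg (by omega)]
    by_cases hc : k ≤ (v.val - (s+t)) + 1
    · have e : ((Finset.range (2*s)).filter (fun m => cross s t k v.val m ∨ cross s t k m v.val))
          = Finset.Ico 0 t ∪ Finset.Ico (t+(v.val-(s+t))+1-k) (t+(v.val-(s+t))+1) := by
        ext m
        rw [Finset.mem_filter]
        simp only [Finset.mem_filter, Finset.mem_range, Finset.mem_union, Finset.mem_Ico,
          cross, lrel]
        omega
      rw [e, two_ico_card _ _ _ _ (by omega)]; omega
    · have e : ((Finset.range (2*s)).filter (fun m => cross s t k v.val m ∨ cross s t k m v.val))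
          = Finset.Ico 0 (t+(v.val-(s+t))+1) ∪ Finset.Ico (2*t+(v.val-(s+t))+1-k) s := by
        ext m
        rw [Finset.mem_filter]
        simp only [Finset.mem_filter, Finset.mem_range, Finset.mem_union, Finset.mem_Ico,
          cross, lrel]
        omega
      rw [e, two_ico_card _ _ _ _ (by omega)]; omega

lemma myG_side {s t k : ℕ} {v w : Fin (2*s)} (h : (myG s t k).Adj v w) :
    (v.val < s ∧ s ≤ w.val) ∨ (w.val < s ∧ s ≤ v.val) := by
  rcases h with ⟨h1, h2, -⟩ | ⟨h1, h2, -⟩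
  · exact Or.inl ⟨h1, h2⟩
  · exact Or.inr ⟨h1, h2⟩

lemma myG_girth {s t k : ℕ} (ht : 2 ≤ t) (hs : s = 2 * t) : (myG s t k).girth = 4 := by
  have hs4 : 4 ≤ s := by omega
  have htf : ∀ a b c : Fin (2*s), (myG s t k).Adj a b → (myG s t k).Adj a c →
      (myG s t k).Adj b c → False := by
    intro a b c hab hac hbc
    rcases myG_side hab with ⟨h1, h2⟩ | ⟨h1, h2⟩ <;>
      rcases myG_side hac with ⟨h3, h4⟩ | ⟨h3, h4⟩ <;>
      rcases myG_side hbc with ⟨h5, h6⟩ | ⟨h5, h6⟩ <;> omega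
  have hab : (myG s t k).Adj ⟨0, by omega⟩ ⟨s, by omega⟩ := by
    refine Or.inl ⟨?_, ?_, Or.inl ?_⟩ <;> · show (_ : ℕ) ≤ _; simp only [Fin.val_mk]; omega
  have hbc : (myG s t k).Adj ⟨s, by omega⟩ ⟨1, by omega⟩ := by
    refine Or.inr ⟨?_, ?_, Or.inl ?_⟩ <;> · show (_ : ℕ) ≤ _; simp only [Fin.val_mk]; omega
  have hcd : (myG s t k).Adj ⟨1, by omega⟩ ⟨s+1, by omega⟩ := by
    refine Or.inl ⟨?_, ?_, Or.inl ?_⟩ <;> · show (_ : ℕ) ≤ _; simp only [Fin.val_mk]; omega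
  have hda : (myG s t k).Adj ⟨s+1, by omega⟩ ⟨0, by omega⟩ := by
    refine Or.inr ⟨?_, ?_, Or.inl ?_⟩ <;> · show (_ : ℕ) ≤ _; simp only [Fin.val_mk]; omega
  set w : (myG s t k).Walk ⟨0, by omega⟩ ⟨0, by omega⟩ :=
    Walk.cons hab (Walk.cons hbc (Walk.cons hcd (Walk.cons hda Walk.nil))) with hw
  have hwc : w.IsCycle := by
    rw [Walk.isCycle_def]
    refine ⟨?_, by simp [hw], ?_⟩
    · rw [Walk.isTrail_def]
      simp [hw, Sym2.eq_iff, Fin.ext_iff]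
      omega
    · simp [hw, Fin.ext_iff]
      omega
  have hwl : w.length = 4 := by simp [hw]
  have hle : (myG s t k).egirth ≤ 4 := by
    have h1 : (myG s t k).egirth ≤ w.length := egirth_le_of_cycle w hwc
    rw [hwl] at h1
    exact_mod_cast h1
  have hge : (4 : ℕ∞) ≤ (myG s t k).egirth := by
    rw [le_egirth]
    intro a p hp
    have h3 := hp.three_le_length
    rcases Nat.lt_or_ge p.length 4 with h4 | h4
    · exfalso
      have hl3 : p.length = 3 := by omega
      obtain ⟨S, hS⟩ := is3Clique_iff_exists_cycle_length_three.mpr ⟨a, p, hp, hl3⟩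
      rw [is3Clique_iff] at hS
      obtain ⟨x, y, z, hxy, hxz, hyz, -⟩ := hS
      exact htf x y z hxy hxz hyz
    · exact_mod_cast h4
  have heq : (myG s t k).egirth = 4 := le_antisymm hle hge
  rw [girth, heq]
  rfl

lemma ncard_setOf_fin (n : ℕ) (P : ℕ → Prop) [DecidablePred P] :
    {v : Fin n | P v.val}.ncard = ((Finset.range n).filter P).card := by
  classical
  have : {v : Fin n | P v.val} = ↑(Finset.univ.filter (fun v : Fin n => P v.val)) := by
    ext v; simp
  rw [this, Set.ncard_coe_finset, card_filter_fin]

/-! ### Lower bound -/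

lemma babi_lower (r s n : ℕ) (hrs : r < s) (G : SimpleGraph (Fin n))
    (hb : IsBabi r s 4 G) : 2 * s ≤ n := by
  classical
  obtain ⟨hg, hdeg, ⟨vr, hvr⟩, ⟨vs, hvs⟩, hbal⟩ := hb
  have htf := triangle_free_of_girth_four hg
  by_cases hTT : ∃ u v, G.Adj u v ∧ deg G u = s ∧ deg G v = s
  · obtain ⟨u, v, huv, hu, hv⟩ := hTT
    set Nu := Finset.univ.filter (fun w => G.Adj u w) with hNu
    set Nv := Finset.univ.filter (fun w => G.Adj v w) with hNv
    have hdis : Disjoint Nu Nv := by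
      rw [Finset.disjoint_left]
      intro x hx hy
      simp [hNu, hNv] at hx hy
      exact htf u v x huv hx hy
    have hcard : (Nu ∪ Nv).card = 2 * s := by
      rw [Finset.card_union_of_disjoint hdis, ← deg_filter, ← deg_filter, hu, hv]
      ring
    calc 2 * s = (Nu ∪ Nv).card := hcard.symm
      _ ≤ Fintype.card (Fin n) := Finset.card_le_univ _
      _ = n := Fintype.card_fin n
  · push_neg at hTT
    exfalso
    set T := Finset.univ.filter (fun v : Fin n => deg G v = s) with hT
    set R := Finset.univ.filter (fun v : Fin n => deg G v = r) with hR
    have hTR : ∀ w : Fin n, w ∉ T → deg G w = r := by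
      intro w hw
      simp [hT] at hw
      rcases hdeg w with h | h
      · exact h
      · exact absurd h hw
    have hRT : R = Finset.univ.filter (fun w => w ∉ T) := by
      ext w
      simp [hR, hT]
      constructor
      · intro h; omega
      · intro h
        rcases hdeg w with h' | h'
        · exact h'
        · exact absurd h' h
    have hcards : T.card = R.card := by
      have h1 : {v : Fin n | deg G v = s} = ↑T := by ext v; simp [hT]
      have h2 : {v : Fin n | deg G v = r} = ↑R := by ext v; simp [hR]
      rw [h1, h2, Set.ncard_coe_finset, Set.ncard_coe_finset] at hbal
      omega
    -- double counting
    have key : T.card * s ≤ T.card * r := by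
      have lhs : ∑ v ∈ T, (Finset.univ.filter (fun w => G.Adj v w)).card = T.card * s := by
        have hc : ∀ v ∈ T, (Finset.univ.filter (fun w => G.Adj v w)).card = s := by
          intro v hv
          rw [← deg_filter]
          simp [hT] at hv
          exact hv
        rw [Finset.sum_congr rfl hc, Finset.sum_const, smul_eq_mul]
      have swap : ∑ v ∈ T, (Finset.univ.filter (fun w => G.Adj v w)).card
          = ∑ w : Fin n, (T.filter (fun v => G.Adj v w)).card := by
        simp_rw [Finset.card_filter]
        exact Finset.sum_comm
      have bound : ∀ w : Fin n, (T.filter (fun v => G.Adj v w)).card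
          ≤ (if w ∈ T then 0 else r) := by
        intro w
        by_cases hw : w ∈ T
        · rw [if_pos hw]
          have : T.filter (fun v => G.Adj v w) = ∅ := by
            rw [Finset.filter_eq_empty_iff]
            intro v hv hadj
            simp [hT] at hv hw
            exact hTT v w hadj hv hw
          simp [this]
        · rw [if_neg hw]
          have h1 : (T.filter (fun v => G.Adj v w)).card
              ≤ (Finset.univ.filter (fun v => G.Adj w v)).card := by
            apply Finset.card_le_card
            intro v hv
            simp at hv ⊢
            exact hv.2.symm
          rw [← deg_filter, hTR w hw] at h1
          exact h1
      have rhs : ∑ w : Fin n, (if w ∈ T then 0 else r) = R.card * r := by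
        rw [Finset.sum_ite, Finset.sum_const, Finset.sum_const, hRT]
        simp [mul_comm]
      calc T.card * s = ∑ v ∈ T, (Finset.univ.filter (fun w => G.Adj v w)).card := lhs.symm
        _ = ∑ w : Fin n, (T.filter (fun v => G.Adj v w)).card := swap
        _ ≤ ∑ w : Fin n, (if w ∈ T then 0 else r) := Finset.sum_le_sum (fun w _ => bound w)
        _ = R.card * r := rhs
        _ = T.card * r := by rw [hcards]
    have hTpos : 0 < T.card := by
      rw [Finset.card_pos]
      exact ⟨vs, by simp [hT, hvs]⟩
    nlinarith

/-! ### Main theorem -/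

/-- `n_bb(r,s;4) = 2s` when `2r > s` and `s` is even. -/
theorem stmt_13 (r s : ℕ) (hr : 2 ≤ r) (hrs : r < s) (h2r : s < 2 * r) (hse : Even s) :
    (∃ G : SimpleGraph (Fin (2 * s)), IsBabi r s 4 G) ∧
    (∀ (n : ℕ) (G : SimpleGraph (Fin n)), IsBabi r s 4 G → 2 * s ≤ n) := by
  constructor
  · -- construction
    obtain ⟨t, hst⟩ := hse
    have hs : s = 2 * t := by omega
    have ht : 2 ≤ t := by omega
    set k := r - t with hk
    have hk1 : 1 ≤ k := by omega
    have hkt : k < t := by omega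
    have hrtk : r = t + k := by omega
    refine ⟨myG s t k, myG_girth ht hs, ?_, ?_, ?_, ?_⟩
    · intro v
      rw [myG_deg s t k ht hs hk1 hkt v]
      split_ifs with h
      · exact Or.inr rfl
      · exact Or.inl (by omega)
    · refine ⟨⟨t, by omega⟩, ?_⟩
      rw [myG_deg s t k ht hs hk1 hkt]
      rw [if_neg (by simp only [Fin.val_mk]; omega)]
      omega
    · refine ⟨⟨0, by omega⟩, ?_⟩
      rw [myG_deg s t k ht hs hk1 hkt]
      rw [if_pos (by simp only [Fin.val_mk]; omega)]
    · have hset1 : {v : Fin (2*s) | deg (myG s t k) v = r}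
          = {v : Fin (2*s) | ¬(v.val < t ∨ (s ≤ v.val ∧ v.val < s + t))} := by
        ext v
        rw [Set.mem_setOf_eq, Set.mem_setOf_eq, myG_deg s t k ht hs hk1 hkt v]
        split_ifs with h
        · simp [h]; omega
        · simp [h]; omega
      have hset2 : {v : Fin (2*s) | deg (myG s t k) v = s}
          = {v : Fin (2*s) | v.val < t ∨ (s ≤ v.val ∧ v.val < s + t)} := by
        ext v
        rw [Set.mem_setOf_eq, Set.mem_setOf_eq, myG_deg s t k ht hs hk1 hkt v]
        split_ifs with h
        · simp [h]
        · simp [h]; omega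
      rw [hset1, hset2,
        ncard_setOf_fin (2*s) (fun m => ¬(m < t ∨ (s ≤ m ∧ m < s + t))),
        ncard_setOf_fin (2*s) (fun m => m < t ∨ (s ≤ m ∧ m < s + t))]
      have e1 : ((Finset.range (2*s)).filter
            (fun m => ¬(m < t ∨ (s ≤ m ∧ m < s + t))))
          = Finset.Ico t s ∪ Finset.Ico (s+t) (2*s) := by
        ext m
        simp only [Finset.mem_filter, Finset.mem_range, Finset.mem_union, Finset.mem_Ico]
        omega
      have e2 : ((Finset.range (2*s)).filter
            (fun m => m < t ∨ (s ≤ m ∧ m < s + t)))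
          = Finset.Ico 0 t ∪ Finset.Ico s (s+t) := by
        ext m
        simp only [Finset.mem_filter, Finset.mem_range, Finset.mem_union, Finset.mem_Ico]
        omega
      rw [e1, e2, two_ico_card _ _ _ _ (by omega), two_ico_card _ _ _ _ (by omega)]
      omega
  · intro n G hb
    exact babi_lower r s n hrs G hb
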